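/- arXiv:gr-qc/0210035 — 2 statements merged into one kernel-verified Lean document; each statement's English description precedes it below -/
import Mathlib

section
/- Let G : ℝ → ℝ be continuous on [0, ∞) and let x_c > 0 be the smallest positive root of x·G(x) = 1 (or x_c = +∞ if no such root exists). Let r : (0, v₁] → ℝ be a positive C¹ solution of dr/dv = G(v/r) with v_i/r(v_i) < x_c at some point v_i ∈ (0, v₁]. Then the function x(v) := v/r(v) is strictly increasing on (0, v_i] and satisfies 0 ≤ x(v) < x_c for all v ∈ (0, v_i]. -/
open Set Filter Topology

/-- Proposition 1 (core): along an outgoing radial null curve `dr/dv = G(v/r)` with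
`v_i/r(v_i)` below the first positive root `x_c` of `x G(x) = 1`, the similarity variable
`x(v) = v/r(v)` is strictly increasing and stays in `[0, x_c)`. -/
theorem similarity_variable_monotone_on_null_curve
    (G : ℝ → ℝ) (hGcont : ContinuousOn G (Set.Ici 0))
    (xc : ℝ) (hxc : 0 < xc)
    (hnoroot : ∀ x ∈ Set.Ioo (0:ℝ) xc, x * G x ≠ 1)
    (v₁ : ℝ) (hv₁ : 0 < v₁) (r : ℝ → ℝ)
    (hrpos : ∀ v ∈ Set.Ioc (0:ℝ) v₁, 0 < r v)
    (hode : ∀ v ∈ Set.Ioc (0:ℝ) v₁, HasDerivAt r (G (v / r v)) v)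
    (vi : ℝ) (hvi : vi ∈ Set.Ioc (0:ℝ) v₁) (hxi : vi / r vi < xc) :
    StrictMonoOn (fun v => v / r v) (Set.Ioc (0:ℝ) vi) ∧
      ∀ v ∈ Set.Ioc (0:ℝ) vi, 0 ≤ v / r v ∧ v / r v < xc := by
  set F : ℝ → ℝ := fun v => v / r v with hFdef
  -- Step 1: 1 - y * G y > 0 for 0 ≤ y < xc
  have hpos : ∀ y : ℝ, 0 ≤ y → y < xc → 0 < 1 - y * G y := by
    intro y hy0 hyc
    by_contra h
    push_neg at h
    have hy1 : (1:ℝ) ≤ y * G y := by linarith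
    have hyne : y ≠ 0 := by
      rintro rfl; simp at hy1; linarith
    have hcφ : ContinuousOn (fun z => z * G z) (Icc 0 y) := by
      exact (continuousOn_id.mul (hGcont.mono (fun z hz => hz.1)))
    have h1 : (1:ℝ) ∈ Icc ((fun z => z * G z) 0) ((fun z => z * G z) y) := by
      simp only [zero_mul]
      exact ⟨zero_le_one, hy1⟩
    obtain ⟨z, hz, hzeq⟩ := intermediate_value_Icc hy0 hcφ h1
    have hzne : z ≠ 0 := by
      rintro rfl; simp at hzeq
    exact hnoroot z ⟨lt_of_le_of_ne hz.1 (Ne.symm hzne), lt_of_le_of_lt hz.2 hyc⟩ hzeq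
  -- derivative of F
  have hF : ∀ v ∈ Ioc (0:ℝ) v₁,
      HasDerivAt F ((1 - F v * G (F v)) / r v) v := by
    intro v hv
    have hr := hrpos v hv
    have h1 : HasDerivAt F ((1 * r v - v * G (v / r v)) / (r v)^2) v :=
      (hasDerivAt_id v).div (hode v hv) hr.ne'
    convert h1 using 1
    have hv' : v / r v * r v = v := div_mul_cancel₀ v hr.ne'
    rw [div_eq_div_iff hr.ne' (pow_pos hr 2).ne', sq]
    calc (1 - v / r v * G (v / r v)) * (r v * r v)
        = (r v - (v / r v * r v) * G (v / r v)) * r v := by ring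
      _ = (1 * r v - v * G (v / r v)) * r v := by rw [hv']; ring
  have hFc : ContinuousOn F (Ioc 0 v₁) := fun v hv =>
    ((hF v hv).continuousAt).continuousWithinAt
  have hFnn : ∀ v ∈ Ioc (0:ℝ) v₁, 0 < F v := fun v hv =>
    div_pos hv.1 (hrpos v hv)
  -- Step 2: F v < xc on (0, vi]
  have hlt : ∀ v ∈ Ioc (0:ℝ) vi, F v < xc := by
    by_contra hcon
    push_neg at hcon
    obtain ⟨v₀, hv₀, hv₀x⟩ := hcon
    have hsubIoc : Icc v₀ vi ⊆ Ioc (0:ℝ) v₁ := fun z hz =>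
      ⟨lt_of_lt_of_le hv₀.1 hz.1, le_trans hz.2 hvi.2⟩
    set T : Set ℝ := Icc v₀ vi ∩ F ⁻¹' (Ici xc) with hTdef
    have hTne : T.Nonempty := ⟨v₀, ⟨le_refl _, hv₀.2⟩, hv₀x⟩
    have hTclosed : IsClosed T :=
      (hFc.mono hsubIoc).preimage_isClosed_of_isClosed isClosed_Icc isClosed_Ici
    have hTcompact : IsCompact T :=
      isCompact_Icc.of_isClosed_subset hTclosed inter_subset_left
    obtain ⟨s, hsdef⟩ : ∃ s, s = sSup T := ⟨_, rfl⟩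
    have hs : s ∈ T := hsdef ▸ hTcompact.sSup_mem hTne
    have hsIcc : s ∈ Icc v₀ vi := hs.1
    have hsF : xc ≤ F s := hs.2
    have hsne : s ≠ vi := by
      rintro rfl; exact absurd hxi (not_lt.mpr hsF)
    have hslt : s < vi := lt_of_le_of_ne hsIcc.2 hsne
    -- on (s, vi), F < xc
    have hmid : ∀ v ∈ Ioo s vi, F v < xc := by
      intro v hv
      by_contra hh
      push_neg at hh
      have hvT : v ∈ T := ⟨⟨le_trans hsIcc.1 hv.1.le, hv.2.le⟩, hh⟩
      exact absurd (hsdef ▸ le_csSup hTcompact.bddAbove hvT) (not_le.mpr hv.1)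
    have hsub : Icc s vi ⊆ Ioc (0:ℝ) v₁ := fun z hz =>
      ⟨lt_of_lt_of_le (lt_of_lt_of_le hv₀.1 hsIcc.1) hz.1, le_trans hz.2 hvi.2⟩
    have hmono : StrictMonoOn F (Icc s vi) := by
      apply StrictMonoOn.mono (s := Icc s vi) ?_ (le_refl _)
      apply strictMonoOn_of_deriv_pos (convex_Icc s vi) (hFc.mono hsub)
      intro v hv
      rw [interior_Icc] at hv
      have hvIoc : v ∈ Ioc (0:ℝ) v₁ := hsub ⟨hv.1.le, hv.2.le⟩
      rw [(hF v hvIoc).deriv]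
      exact div_pos (hpos _ (hFnn v hvIoc).le (hmid v hv)) (hrpos v hvIoc)
    have : F s < F vi := hmono ⟨le_refl _, hslt.le⟩ ⟨hslt.le, le_refl _⟩ hslt
    linarith
  -- Step 3: strict monotonicity on (0, vi]
  have hsub2 : Ioc (0:ℝ) vi ⊆ Ioc (0:ℝ) v₁ := fun z hz => ⟨hz.1, le_trans hz.2 hvi.2⟩
  have hmono : StrictMonoOn F (Ioc (0:ℝ) vi) := by
    apply strictMonoOn_of_deriv_pos (convex_Ioc 0 vi) (hFc.mono hsub2)
    intro v hv
    rw [interior_Ioc] at hv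
    have hvIoc : v ∈ Ioc (0:ℝ) v₁ := hsub2 ⟨hv.1, hv.2.le⟩
    rw [(hF v hvIoc).deriv]
    exact div_pos (hpos _ (hFnn v hvIoc).le (hlt v ⟨hv.1, hv.2.le⟩)) (hrpos v hvIoc)
  exact ⟨hmono, fun v hv => ⟨(hFnn v (hsub2 hv)).le, hlt v hv⟩⟩
end

section
/- Let G : [0, ∞) → ℝ be continuous with G(x) < 1/x for all x > 0. Let r : (0, v₁] → (0, ∞) be a C¹ solution of dr/dv = G(v/r). If r(v) → 0 as v ↓ 0, then the limit x_l := lim_{v↓0} v/r(v) exists, is finite, and satisfies x_l · G(x_l) = 1 — a contradiction. Hence r(v) is bounded away from 0 as v ↓ 0. -/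
open Set Filter Topology

/-- If `f` has nonnegative derivative `f'` at every point of `Ioc a b`, it is monotone there. -/
private lemma monoOn_of_hasDerivAt_nonneg {f f' : ℝ → ℝ} {a b : ℝ}
    (hf : ∀ v ∈ Set.Ioc a b, HasDerivAt f (f' v) v)
    (h0 : ∀ v ∈ Set.Ioc a b, 0 ≤ f' v) : MonotoneOn f (Set.Ioc a b) := by
  refine monotoneOn_of_deriv_nonneg (convex_Ioc a b)
    (fun v hv => (hf v hv).continuousAt.continuousWithinAt)
    (fun v hv => ?_) (fun v hv => ?_)
  · rw [interior_Ioc] at hv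
    exact ((hf v (Set.Ioo_subset_Ioc_self hv)).differentiableAt).differentiableWithinAt
  · rw [interior_Ioc] at hv
    rw [(hf v (Set.Ioo_subset_Ioc_self hv)).deriv]
    exact h0 v (Set.Ioo_subset_Ioc_self hv)

/-- Corollary 1: if `x G(x) < 1` for all `x > 0`, then along a solution of `dr/dv = G(v/r)`
the radius cannot tend to `0` as `v ↓ 0` (else `x_l = lim v/r` would exist and satisfy
`x_l G(x_l) = 1`, a contradiction); hence `r` is bounded away from `0` as `v ↓ 0`. -/
theorem radius_bounded_away_from_zero
    (G : ℝ → ℝ) (hGcont : ContinuousOn G (Set.Ici 0))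
    (hG : ∀ x : ℝ, 0 < x → G x < 1 / x)
    (v₁ : ℝ) (hv₁ : 0 < v₁) (r : ℝ → ℝ)
    (hrpos : ∀ v ∈ Set.Ioc (0:ℝ) v₁, 0 < r v)
    (hode : ∀ v ∈ Set.Ioc (0:ℝ) v₁, HasDerivAt r (G (v / r v)) v) :
    (Filter.Tendsto r (nhdsWithin 0 (Set.Ioi 0)) (nhds 0) →
      ∃ xl : ℝ, Filter.Tendsto (fun v => v / r v) (nhdsWithin 0 (Set.Ioi 0)) (nhds xl) ∧
        xl * G xl = 1) ∧
    ¬ Filter.Tendsto r (nhdsWithin 0 (Set.Ioi 0)) (nhds 0) ∧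
    ∃ ε > (0:ℝ), ∀ᶠ v in nhdsWithin 0 (Set.Ioi 0), ε ≤ r v := by
  have hmem : Set.Ioc (0:ℝ) v₁ ∈ 𝓝[>] (0:ℝ) := Ioc_mem_nhdsGT_of_mem ⟨le_refl 0, hv₁⟩
  -- positivity of x v = v / r v
  have hxpos : ∀ v ∈ Set.Ioc (0:ℝ) v₁, 0 < v / r v :=
    fun v hv => div_pos hv.1 (hrpos v hv)
  -- derivative of x = v / r v
  have hxderiv : ∀ v ∈ Set.Ioc (0:ℝ) v₁,
      HasDerivAt (fun v => v / r v) ((1 * r v - v * G (v / r v)) / (r v)^2) v :=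
    fun v hv => (hasDerivAt_id v).div (hode v hv) (hrpos v hv).ne'
  have hderivpos : ∀ v ∈ Set.Ioc (0:ℝ) v₁,
      0 ≤ (1 * r v - v * G (v / r v)) / (r v)^2 := by
    intro v hv
    have hx := hxpos v hv
    have hr := hrpos v hv
    have h1 : v / r v * G (v / r v) < 1 := by
      have h2 := mul_lt_mul_of_pos_left (hG (v / r v) hx) hx
      rwa [mul_one_div, div_self hx.ne'] at h2
    have h2 : v * G (v / r v) < r v := by
      rw [div_mul_eq_mul_div] at h1
      exact (div_lt_one hr).mp h1
    apply div_nonneg (by linarith) (by positivity)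
  -- x is monotone on Ioc 0 v₁
  have hxmono : MonotoneOn (fun v => v / r v) (Set.Ioc 0 v₁) :=
    monoOn_of_hasDerivAt_nonneg hxderiv hderivpos
  have hne : (Set.Ioo (0:ℝ) v₁).Nonempty := ⟨v₁/2, by constructor <;> linarith⟩
  have hbdd : BddBelow ((fun v => v / r v) '' Set.Ioo 0 v₁) := by
    refine ⟨0, ?_⟩
    rintro y ⟨v, hv, rfl⟩
    exact (hxpos v (Set.Ioo_subset_Ioc_self hv)).le
  set xl : ℝ := sInf ((fun v => v / r v) '' Set.Ioo 0 v₁) with hxldef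
  have hxl : Tendsto (fun v => v / r v) (𝓝[>] (0:ℝ)) (𝓝 xl) :=
    MonotoneOn.tendsto_nhdsWithin_Ioo_right hne (hxmono.mono Set.Ioo_subset_Ioc_self) hbdd
  have hxl0 : 0 ≤ xl :=
    ge_of_tendsto hxl (mem_of_superset hmem fun v hv => (hxpos v hv).le)
  have hGxl : Tendsto (fun v => G (v / r v)) (𝓝[>] (0:ℝ)) (𝓝 (G xl)) := by
    have h1 : Tendsto (fun v => v / r v) (𝓝[>] (0:ℝ)) (𝓝[Set.Ici 0] xl) :=
      tendsto_nhdsWithin_iff.2 ⟨hxl, mem_of_superset hmem fun v hv => (hxpos v hv).le⟩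
    exact (hGcont xl hxl0).tendsto.comp h1
  -- Part A
  have partA : Filter.Tendsto r (nhdsWithin 0 (Set.Ioi 0)) (nhds 0) →
      ∃ xl : ℝ, Filter.Tendsto (fun v => v / r v) (nhdsWithin 0 (Set.Ioi 0)) (nhds xl) ∧
        xl * G xl = 1 := by
    intro hr0
    refine ⟨xl, hxl, ?_⟩
    have hL : Tendsto (fun v => r v / v) (𝓝[>] (0:ℝ)) (𝓝 (G xl)) := by
      rw [Metric.tendsto_nhds]
      intro ε hε
      have hev : {v : ℝ | dist (G (v / r v)) (G xl) < ε/2} ∈ 𝓝[>] (0:ℝ) :=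
        Metric.tendsto_nhds.mp hGxl (ε/2) (half_pos hε)
      obtain ⟨δ, hδ0, hδ⟩ := mem_nhdsGT_iff_exists_Ioc_subset.mp
        (inter_mem hev hmem)
      rw [Set.mem_Ioi] at hδ0
      have key : ∀ v ∈ Set.Ioc (0:ℝ) δ,
          |G (v / r v) - G xl| < ε/2 ∧ v ∈ Set.Ioc (0:ℝ) v₁ := by
        intro v hv
        have := hδ hv
        exact ⟨by simpa [Real.dist_eq] using this.1, this.2⟩
      set L := G xl with hLdef
      -- lower bound function
      have hmono₁ : MonotoneOn (fun t => r t - t * (L - ε/2)) (Set.Ioc 0 δ) := by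
        refine monoOn_of_hasDerivAt_nonneg
          (f' := fun t => G (t / r t) - (L - ε/2)) (fun t ht => ?_) (fun t ht => ?_)
        · exact (hode t (key t ht).2).sub (hasDerivAt_mul_const (L - ε/2))
        · have := (key t ht).1
          rw [abs_lt] at this
          linarith [this.1]
      have hmono₂ : MonotoneOn (fun t => t * (L + ε/2) - r t) (Set.Ioc 0 δ) := by
        refine monoOn_of_hasDerivAt_nonneg
          (f' := fun t => (L + ε/2) - G (t / r t)) (fun t ht => ?_) (fun t ht => ?_)
        · exact (hasDerivAt_mul_const (L + ε/2)).sub (hode t (key t ht).2)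
        · have := (key t ht).1
          rw [abs_lt] at this
          linarith [this.2]
      filter_upwards [Ioc_mem_nhdsGT_of_mem (Set.mem_Ico.mpr ⟨le_refl 0, hδ0⟩)] with v hv
      have hv0 : (0:ℝ) < v := hv.1
      -- lower bound
      have hmul0 : Tendsto (fun u : ℝ => u * (L - ε/2)) (𝓝[>] (0:ℝ)) (𝓝 0) := by
        simpa using ((continuous_mul_right (L - ε/2)).tendsto 0).mono_left nhdsWithin_le_nhds
      have hmul0' : Tendsto (fun u : ℝ => u * (L + ε/2)) (𝓝[>] (0:ℝ)) (𝓝 0) := by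
        simpa using ((continuous_mul_right (L + ε/2)).tendsto 0).mono_left nhdsWithin_le_nhds
      have hlim₁ : Tendsto (fun u => r u - u * (L - ε/2)) (𝓝[>] (0:ℝ)) (𝓝 0) := by
        simpa using hr0.sub hmul0
      have hlim₂ : Tendsto (fun u => u * (L + ε/2) - r u) (𝓝[>] (0:ℝ)) (𝓝 0) := by
        simpa using hmul0'.sub hr0
      have hub₁ : ∀ᶠ u in 𝓝[>] (0:ℝ), r u - u * (L - ε/2) ≤ r v - v * (L - ε/2) := by
        filter_upwards [Ioc_mem_nhdsGT_of_mem (Set.mem_Ico.mpr ⟨le_refl 0, hv0⟩)] with u hu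
        exact hmono₁ ⟨hu.1, hu.2.trans hv.2⟩ hv hu.2
      have hub₂ : ∀ᶠ u in 𝓝[>] (0:ℝ), u * (L + ε/2) - r u ≤ v * (L + ε/2) - r v := by
        filter_upwards [Ioc_mem_nhdsGT_of_mem (Set.mem_Ico.mpr ⟨le_refl 0, hv0⟩)] with u hu
        exact hmono₂ ⟨hu.1, hu.2.trans hv.2⟩ hv hu.2
      have h₁ : 0 ≤ r v - v * (L - ε/2) := le_of_tendsto hlim₁ hub₁
      have h₂ : 0 ≤ v * (L + ε/2) - r v := le_of_tendsto hlim₂ hub₂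
      have hdiv₁ : L - ε/2 ≤ r v / v := (le_div_iff₀ hv0).2 (by nlinarith)
      have hdiv₂ : r v / v ≤ L + ε/2 := (div_le_iff₀ hv0).2 (by nlinarith)
      rw [Real.dist_eq, abs_lt]
      constructor <;> linarith
    have hmul : Tendsto (fun v => (r v / v) * (v / r v)) (𝓝[>] (0:ℝ)) (𝓝 (G xl * xl)) :=
      hL.mul hxl
    have hone : Tendsto (fun v => (r v / v) * (v / r v)) (𝓝[>] (0:ℝ)) (𝓝 1) := by
      refine Tendsto.congr' ?_ tendsto_const_nhds
      filter_upwards [hmem] with v hv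
      rw [div_mul_div_comm, mul_comm v (r v), div_self (mul_pos (hrpos v hv) hv.1).ne']
    have h1 := tendsto_nhds_unique hmul hone
    exact (mul_comm xl (G xl)).trans h1
  refine ⟨partA, ?_⟩
  have partB : ¬ Filter.Tendsto r (nhdsWithin 0 (Set.Ioi 0)) (nhds 0) := by
    intro hr0
    obtain ⟨y, hy, hy1⟩ := partA hr0
    have hyne : y ≠ 0 := by
      intro h; rw [h] at hy1; simp at hy1
    have hy0 : 0 ≤ y :=
      ge_of_tendsto hy (mem_of_superset hmem fun v hv => (hxpos v hv).le)
    have hypos : 0 < y := lt_of_le_of_ne hy0 (Ne.symm hyne)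
    have h2 : y * G y < y * (1/y) := mul_lt_mul_of_pos_left (hG y hypos) hypos
    have h3 : y * (1/y) = 1 := by
      rw [mul_one_div, div_self hyne]
    linarith
  refine ⟨partB, ?_⟩
  -- Part C
  have hevM : {v : ℝ | dist (G (v / r v)) (G xl) < 1} ∈ 𝓝[>] (0:ℝ) :=
    Metric.tendsto_nhds.mp hGxl 1 one_pos
  obtain ⟨δ, hδ0, hδ⟩ := mem_nhdsGT_iff_exists_Ioc_subset.mp (inter_mem hevM hmem)
  rw [Set.mem_Ioi] at hδ0
  set M := |G xl| + 1 with hMdef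
  have hMpos : 0 < M := by positivity
  have key : ∀ v ∈ Set.Ioc (0:ℝ) δ, |G (v / r v)| ≤ M ∧ v ∈ Set.Ioc (0:ℝ) v₁ := by
    intro v hv
    have h := hδ hv
    refine ⟨?_, h.2⟩
    have h1 : |G (v / r v) - G xl| < 1 := by simpa [Real.dist_eq] using h.1
    calc |G (v / r v)| ≤ |G (v / r v) - G xl| + |G xl| := by
          simpa using abs_add_le (G (v / r v) - G xl) (G xl)
      _ ≤ M := by rw [hMdef]; linarith
  have hgmono : MonotoneOn (fun v => r v + v * M) (Set.Ioc 0 δ) := by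
    refine monoOn_of_hasDerivAt_nonneg
      (f' := fun v => G (v / r v) + M) (fun v hv => ?_) (fun v hv => ?_)
    · exact (hode v (key v hv).2).add (hasDerivAt_mul_const M)
    · have := (key v hv).1
      rw [abs_le] at this
      linarith [this.1]
  have hne' : (Set.Ioo (0:ℝ) δ).Nonempty := ⟨δ/2, by constructor <;> linarith⟩
  have hbdd' : BddBelow ((fun v => r v + v * M) '' Set.Ioo 0 δ) := by
    refine ⟨0, ?_⟩
    rintro y ⟨v, hv, rfl⟩
    have h1 := hrpos v (key v (Set.Ioo_subset_Ioc_self hv)).2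
    show (0:ℝ) ≤ r v + v * M
    nlinarith [hv.1, hMpos]
  set L' : ℝ := sInf ((fun v => r v + v * M) '' Set.Ioo 0 δ) with hL'def
  have hgL : Tendsto (fun v => r v + v * M) (𝓝[>] (0:ℝ)) (𝓝 L') :=
    MonotoneOn.tendsto_nhdsWithin_Ioo_right hne' (hgmono.mono Set.Ioo_subset_Ioc_self) hbdd'
  have hvM : Tendsto (fun v : ℝ => v * M) (𝓝[>] (0:ℝ)) (𝓝 0) := by
    simpa using ((continuous_mul_right M).tendsto 0).mono_left nhdsWithin_le_nhds
  have hrL : Tendsto r (𝓝[>] (0:ℝ)) (𝓝 L') := by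
    have := hgL.sub hvM
    simpa using this
  have hL'0 : 0 ≤ L' :=
    ge_of_tendsto hrL (mem_of_superset hmem fun v hv => (hrpos v hv).le)
  have hL'ne : L' ≠ 0 := by
    intro h; rw [h] at hrL; exact partB hrL
  have hL'pos : 0 < L' := lt_of_le_of_ne hL'0 (Ne.symm hL'ne)
  refine ⟨L'/2, by linarith, ?_⟩
  exact hrL.eventually (eventually_ge_nhds (by linarith))
end
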